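/- arXiv:2405.09532 — 9 statements merged into one kernel-verified Lean document; each statement's English description precedes it below -/
import Mathlib

section
/- Let A be an associative unital ℝ-algebra, let n be a real number, and let L, Q, T ∈ A satisfy L*Q − Q*L = 4•T + (2n+4)•1 and L*T − T*L = 2•L. Then for every integer ℓ ≥ 1 one has L^ℓ*Q − Q*L^ℓ = (2ℓ)•(L^(ℓ−1)*(2•T + (n+4−2ℓ)•1)). -/
/-- Commutator identity `[L^ℓ, Q] = 2ℓ • L^(ℓ-1) * (2•T + (n+4-2ℓ)•1)` in an
associative unital ℝ-algebra, modelling `[Δ̃^ℓ, Q]` on the ambient space. -/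
theorem pow_commutator_identity {A : Type*} [Ring A] [Algebra ℝ A]
    (n : ℝ) (L Q T : A)
    (hLQ : L * Q - Q * L = (4 : ℝ) • T + (2 * n + 4) • (1 : A))
    (hLT : L * T - T * L = (2 : ℝ) • L) :
    ∀ ℓ : ℕ, 1 ≤ ℓ →
      L ^ ℓ * Q - Q * L ^ ℓ =
        (2 * (ℓ : ℝ)) • (L ^ (ℓ - 1) * ((2 : ℝ) • T + (n + 4 - 2 * (ℓ : ℝ)) • (1 : A))) := by
  have hTL : ∀ k : ℕ, T * L ^ k = L ^ k * T - (2 * (k : ℝ)) • L ^ k := by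
    intro k
    induction k with
    | zero => simp
    | succ k ih =>
      have h1 : L * T = T * L + (2 : ℝ) • L := by
        have := hLT; linear_combination (norm := noncomm_ring) this
      push_cast
      calc T * L ^ (k + 1) = (T * L ^ k) * L := by rw [pow_succ, mul_assoc]
        _ = (L ^ k * T - (2 * (k : ℝ)) • L ^ k) * L := by rw [ih]
        _ = L ^ k * (T * L) - (2 * (k : ℝ)) • L ^ (k + 1) := by
            rw [sub_mul, smul_mul_assoc, mul_assoc, pow_succ]
        _ = L ^ k * (L * T - (2 : ℝ) • L) - (2 * (k : ℝ)) • L ^ (k + 1) := by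
            rw [h1]; congr 1; noncomm_ring
        _ = L ^ (k + 1) * T - (2 * ((k : ℝ) + 1)) • L ^ (k + 1) := by
            simp only [mul_sub, ← mul_assoc, ← pow_succ, mul_smul_comm]
            module
  have main : ∀ k : ℕ, L ^ (k + 1) * Q - Q * L ^ (k + 1) =
      (2 * ((k : ℝ) + 1)) • (L ^ k * ((2 : ℝ) • T + (n + 4 - 2 * ((k : ℝ) + 1)) • (1 : A))) := by
    intro k
    induction k with
    | zero =>
      simp only [pow_one, pow_zero, one_mul, Nat.cast_zero, zero_add]
      rw [hLQ]
      module
    | succ k ih =>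
      have split : L ^ (k + 2) * Q - Q * L ^ (k + 2) =
          L * (L ^ (k + 1) * Q - Q * L ^ (k + 1)) + (L * Q - Q * L) * L ^ (k + 1) := by
        have : L ^ (k + 2) = L * L ^ (k + 1) := by rw [← pow_succ']
        rw [this]; noncomm_ring
      rw [split, ih, hLQ, add_mul, smul_mul_assoc, hTL (k + 1), smul_mul_assoc,
        mul_smul_comm, ← mul_assoc, ← pow_succ']
      push_cast
      simp only [mul_add, mul_sub, mul_one, one_mul, smul_add, smul_sub, smul_smul, mul_smul_comm]
      match_scalars <;> ring
  intro ℓ hℓ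
  obtain ⟨k, rfl⟩ := Nat.exists_eq_add_of_le hℓ
  simpa [add_comm, Nat.add_sub_cancel] using main k
end

section
/- Let R be a commutative ℝ-algebra, let L : R → R be an ℝ-linear map, let T : R → R be an ℝ-linear derivation (T(ab) = T(a)b + aT(b)), let q ∈ R, and let n be a fixed real number. Assume: (i) for every integer ℓ ≥ 1 and every m ∈ R, L^ℓ(q·m) − q·L^ℓ(m) = 2ℓ·L^{ℓ−1}(2T(m) + (n+4−2ℓ)m); (ii) T∘L = L∘T − 2L. Let k ∈ ℕ, let w, w′ ∈ ℝ, let f ∈ R satisfy T(f) = w′·f, let u ∈ R satisfy T(u) = (w−2)·u, and let a₀, …, a_k be arbitrary real numbers. Then Σ_{j=0}^{k} a_j·L^{k−j}(f·L^{j}(q·u)) − q·Σ_{j=0}^{k} a_j·L^{k−j}(f·L^{j}(u)) = Σ_{j=0}^{k−1} b_j·L^{k−j−1}(f·L^{j}(u)), where b_j := 2(j+1)(n+2w−2j−2)a_{j+1} − 2(k−j)(2j+2k−2w−2w′−n)a_j. -/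
/-- The displayed commutator computation in the proof of the construction lemma
(Lemma 2.3): for arbitrary coefficients `a j`,
`Σ a_j L^{k-j}(f·L^j(q·u)) - q·Σ a_j L^{k-j}(f·L^j u) = Σ b_j L^{k-j-1}(f·L^j u)`. -/
theorem commutator_computation {R : Type*} [CommRing R] [Algebra ℝ R]
    (L T : R →ₗ[ℝ] R) (q : R) (n : ℝ)
    (hT : ∀ a b : R, T (a * b) = T a * b + a * T b)
    (hi : ∀ ℓ : ℕ, 1 ≤ ℓ → ∀ m : R,
      (L ^ ℓ) (q * m) - q * (L ^ ℓ) m =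
        (2 * (ℓ : ℝ)) • (L ^ (ℓ - 1)) ((2 : ℝ) • T m + (n + 4 - 2 * (ℓ : ℝ)) • m))
    (hii : T ∘ₗ L = L ∘ₗ T - (2 : ℝ) • L)
    (k : ℕ) (w w' : ℝ) (f : R) (hf : T f = w' • f) (u : R) (hu : T u = (w - 2) • u)
    (a : ℕ → ℝ) :
    (∑ j ∈ Finset.range (k + 1), a j • (L ^ (k - j)) (f * (L ^ j) (q * u)))
      - q * ∑ j ∈ Finset.range (k + 1), a j • (L ^ (k - j)) (f * (L ^ j) u)
    = ∑ j ∈ Finset.range k,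
        (2 * ((j : ℝ) + 1) * (n + 2 * w - 2 * (j : ℝ) - 2) * a (j + 1)
          - 2 * ((k : ℝ) - (j : ℝ)) * (2 * (j : ℝ) + 2 * (k : ℝ) - 2 * w - 2 * w' - n) * a j)
          • (L ^ (k - j - 1)) (f * (L ^ j) u) := by
  -- T applied to L x
  have hTL : ∀ x : R, T (L x) = L (T x) - (2 : ℝ) • L x := by
    intro x
    have := LinearMap.ext_iff.mp hii x
    simpa using this
  -- (A) weight of L^j u
  have hA : ∀ j : ℕ, T ((L ^ j) u) = (w - 2 - 2 * (j : ℝ)) • (L ^ j) u := by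
    intro j
    induction j with
    | zero => simpa using hu
    | succ j ih =>
      rw [pow_succ', Module.End.mul_apply, hTL, ih, map_smul, ← sub_smul]
      congr 1
      push_cast
      ring
  -- (B) weight of f * L^j u
  have hB : ∀ j : ℕ, T (f * (L ^ j) u) = (w' + w - 2 - 2 * (j : ℝ)) • (f * (L ^ j) u) := by
    intro j
    rw [hT, hf, hA, smul_mul_assoc, mul_smul_comm, ← add_smul]
    congr 1
    ring
  -- (C) commuting q through L^j
  have hC : ∀ j : ℕ, (L ^ j) (q * u)
      = q * (L ^ j) u + (2 * (j : ℝ) * (n + 2 * w - 2 * (j : ℝ))) • (L ^ (j - 1)) u := by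
    intro j
    cases j with
    | zero => simp
    | succ j =>
      have h := hi (j + 1) (Nat.succ_le_succ (Nat.zero_le _)) u
      rw [hu] at h
      have e : (2 : ℝ) • ((w - 2) • u) + (n + 4 - 2 * ((j + 1 : ℕ) : ℝ)) • u
          = (n + 2 * w - 2 * ((j + 1 : ℕ) : ℝ)) • u := by
        rw [smul_smul, ← add_smul]; congr 1; push_cast; ring
      rw [e, map_smul, smul_smul, sub_eq_iff_eq_add] at h
      rw [h, add_comm]
  -- per-term identity
  have key : ∀ j : ℕ, j ≤ k →
      (L ^ (k - j)) (f * (L ^ j) (q * u)) - q * (L ^ (k - j)) (f * (L ^ j) u)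
      = (2 * (j : ℝ) * (n + 2 * w - 2 * (j : ℝ))) • (L ^ (k - j)) (f * (L ^ (j - 1)) u)
        + (2 * ((k : ℝ) - (j : ℝ)) * (n + 2 * w + 2 * w' - 2 * (j : ℝ) - 2 * (k : ℝ))) •
            (L ^ (k - j - 1)) (f * (L ^ j) u) := by
    intro j hj
    have expand : (L ^ (k - j)) (f * (L ^ j) (q * u))
        = (L ^ (k - j)) (q * (f * (L ^ j) u))
          + (2 * (j : ℝ) * (n + 2 * w - 2 * (j : ℝ))) • (L ^ (k - j)) (f * (L ^ (j - 1)) u) := by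
      rw [hC j, mul_add, mul_smul_comm, map_add, map_smul]
      ring_nf
    rw [expand]
    rcases eq_or_lt_of_le hj with rfl | hjk
    · simp
    · have h1 : 1 ≤ k - j := by omega
      have h := hi (k - j) h1 (f * (L ^ j) u)
      rw [hB j] at h
      have e : (2 : ℝ) • ((w' + w - 2 - 2 * (j : ℝ)) • (f * (L ^ j) u))
          + (n + 4 - 2 * ((k - j : ℕ) : ℝ)) • (f * (L ^ j) u)
          = (n + 2 * w + 2 * w' - 2 * (j : ℝ) - 2 * (k : ℝ)) • (f * (L ^ j) u) := by
        rw [smul_smul, ← add_smul]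
        congr 1
        rw [Nat.cast_sub hj]
        ring
      rw [e, map_smul, smul_smul, Nat.cast_sub hj, sub_eq_iff_eq_add] at h
      rw [h]
      abel
  -- rewrite LHS as a single sum of differences
  have lhs_eq : (∑ j ∈ Finset.range (k + 1), a j • (L ^ (k - j)) (f * (L ^ j) (q * u)))
      - q * ∑ j ∈ Finset.range (k + 1), a j • (L ^ (k - j)) (f * (L ^ j) u)
      = ∑ j ∈ Finset.range (k + 1),
          a j • ((L ^ (k - j)) (f * (L ^ j) (q * u)) - q * (L ^ (k - j)) (f * (L ^ j) u)) := by
    rw [Finset.mul_sum, ← Finset.sum_sub_distrib]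
    refine Finset.sum_congr rfl fun j _ => ?_
    rw [smul_sub, mul_smul_comm]
  rw [lhs_eq]
  have split : ∑ j ∈ Finset.range (k + 1),
      a j • ((L ^ (k - j)) (f * (L ^ j) (q * u)) - q * (L ^ (k - j)) (f * (L ^ j) u))
      = (∑ j ∈ Finset.range (k + 1),
          a j • ((2 * (j : ℝ) * (n + 2 * w - 2 * (j : ℝ))) • (L ^ (k - j)) (f * (L ^ (j - 1)) u)))
        + ∑ j ∈ Finset.range (k + 1),
          a j • ((2 * ((k : ℝ) - (j : ℝ)) * (n + 2 * w + 2 * w' - 2 * (j : ℝ) - 2 * (k : ℝ))) •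
              (L ^ (k - j - 1)) (f * (L ^ j) u)) := by
    rw [← Finset.sum_add_distrib]
    refine Finset.sum_congr rfl fun j hj => ?_
    rw [key j (by simpa [Nat.lt_succ_iff] using hj), smul_add]
  rw [split]
  rw [Finset.sum_range_succ' (fun j => a j • ((2 * (j : ℝ) * (n + 2 * w - 2 * (j : ℝ))) •
        (L ^ (k - j)) (f * (L ^ (j - 1)) u)))]
  rw [Finset.sum_range_succ]
  simp only [Nat.cast_zero, mul_zero, zero_mul, zero_smul, smul_zero, add_zero, sub_self]
  rw [← Finset.sum_add_distrib]
  refine Finset.sum_congr rfl fun j hj => ?_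
  have hjk : j < k := Finset.mem_range.mp hj
  have e1 : k - (j + 1) = k - j - 1 := by omega
  have e2 : j + 1 - 1 = j := rfl
  rw [e1, e2, smul_smul, smul_smul, ← add_smul]
  congr 1
  push_cast
  ring
end

section
/- Let n, w, w′ be real numbers, let k ∈ ℕ, and for 0 ≤ j ≤ k define a_j := C(k,j)·Γ(j+k−w−w′−n/2)·Γ(n/2+w−j) / (Γ(k−w−w′−n/2)·Γ(n/2+w−k)), where C(k,j) is the binomial coefficient and Γ is the real Gamma function. If j < k and both (k−w−w′−n/2)+j ≠ 0 and n/2+w−j−1 ≠ 0, then 2(j+1)(n+2w−2j−2)·a_{j+1} = 2(k−j)(2j+2k−2w−2w′−n)·a_j; in particular the quantities b_j := 2(j+1)(n+2w−2j−2)a_{j+1} − 2(k−j)(2j+2k−2w−2w′−n)a_j all vanish. -/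
/-- The recursion satisfied by the coefficients `a_j` of the construction lemma
(Lemma 2.3), whence the quantities `b_j` all vanish. -/
theorem coefficient_recursion (n w w' : ℝ) (k : ℕ)
    (a : ℕ → ℝ)
    (ha : ∀ j : ℕ, j ≤ k → a j =
      (Nat.choose k j : ℝ) *
        (Real.Gamma ((j : ℝ) + (k : ℝ) - w - w' - n / 2) * Real.Gamma (n / 2 + w - (j : ℝ)))
        / (Real.Gamma ((k : ℝ) - w - w' - n / 2) * Real.Gamma (n / 2 + w - (k : ℝ))))
    (j : ℕ) (hjk : j < k)
    (h1 : ((k : ℝ) - w - w' - n / 2) + (j : ℝ) ≠ 0)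
    (h2 : n / 2 + w - (j : ℝ) - 1 ≠ 0) :
    2 * ((j : ℝ) + 1) * (n + 2 * w - 2 * (j : ℝ) - 2) * a (j + 1)
      = 2 * ((k : ℝ) - (j : ℝ)) * (2 * (j : ℝ) + 2 * (k : ℝ) - 2 * w - 2 * w' - n) * a j
    ∧ 2 * ((j : ℝ) + 1) * (n + 2 * w - 2 * (j : ℝ) - 2) * a (j + 1)
      - 2 * ((k : ℝ) - (j : ℝ)) * (2 * (j : ℝ) + 2 * (k : ℝ) - 2 * w - 2 * w' - n) * a j = 0 := by
  have hmain : 2 * ((j : ℝ) + 1) * (n + 2 * w - 2 * (j : ℝ) - 2) * a (j + 1)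
      = 2 * ((k : ℝ) - (j : ℝ)) * (2 * (j : ℝ) + 2 * (k : ℝ) - 2 * w - 2 * w' - n) * a j := by
    have hx : Real.Gamma (((j + 1 : ℕ) : ℝ) + (k : ℝ) - w - w' - n / 2)
        = (((k : ℝ) - w - w' - n / 2) + (j : ℝ))
          * Real.Gamma ((j : ℝ) + (k : ℝ) - w - w' - n / 2) := by
      have h := Real.Gamma_add_one h1
      rw [show (((j + 1 : ℕ) : ℝ) + (k : ℝ) - w - w' - n / 2)
            = ((k : ℝ) - w - w' - n / 2) + (j : ℝ) + 1 by push_cast; ring, h,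
          show ((k : ℝ) - w - w' - n / 2) + (j : ℝ)
            = (j : ℝ) + (k : ℝ) - w - w' - n / 2 by ring]
    have hy : Real.Gamma (n / 2 + w - (j : ℝ))
        = (n / 2 + w - (j : ℝ) - 1) * Real.Gamma (n / 2 + w - ((j + 1 : ℕ) : ℝ)) := by
      have h := Real.Gamma_add_one h2
      rw [show n / 2 + w - (j : ℝ) = (n / 2 + w - (j : ℝ) - 1) + 1 by ring, h]
      push_cast
      congr 2 <;> ring
    have hb : ((j : ℝ) + 1) * (Nat.choose k (j + 1) : ℝ)
        = ((k : ℝ) - (j : ℝ)) * (Nat.choose k j : ℝ) := by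
      have h := Nat.choose_succ_right_eq k j
      have h' := congrArg (fun m : ℕ => (m : ℝ)) h
      push_cast [Nat.cast_sub hjk.le] at h'
      linarith [h']
    rw [ha (j + 1) hjk, ha j hjk.le, hx, hy]
    rw [mul_div_assoc', mul_div_assoc']
    congr 1
    push_cast
    linear_combination (4 * ((k : ℝ) - w - w' - n / 2 + (j : ℝ)) * (n / 2 + w - (j : ℝ) - 1)
      * Real.Gamma ((j : ℝ) + (k : ℝ) - w - w' - n / 2)
      * Real.Gamma (n / 2 + w - ((j : ℝ) + 1))) * hb
  exact ⟨hmain, by linarith [hmain]⟩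
end

section
/- Let R be a commutative ℝ-algebra, let L : R → R be an ℝ-linear map, let T : R → R be an ℝ-linear derivation (T(ab) = T(a)b + aT(b)), let q ∈ R, and let n be a fixed real number. Assume: (i) for every integer ℓ ≥ 1 and every m ∈ R, L^ℓ(q·m) − q·L^ℓ(m) = 2ℓ·L^{ℓ−1}(2T(m) + (n+4−2ℓ)m); (ii) T∘L = L∘T − 2L. Let k ∈ ℕ and w, w′ ∈ ℝ, and define a_j := C(k,j)·Γ(j+k−w−w′−n/2)·Γ(n/2+w−j)/(Γ(k−w−w′−n/2)·Γ(n/2+w−k)) for 0 ≤ j ≤ k, where Γ is the real Gamma function. Assume for every j with 0 ≤ j < k that (k−w−w′−n/2)+j ≠ 0 and n/2+w−j−1 ≠ 0. Then for every f ∈ R with T(f) = w′·f and every u ∈ R with T(u) = (w−2)·u, one has Σ_{j=0}^{k} a_j·L^{k−j}(f·L^{j}(q·u)) = q·Σ_{j=0}^{k} a_j·L^{k−j}(f·L^{j}(u)). -/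
/-- The algebraic content of the construction lemma (Lemma 2.3): the operator
`Σ a_j L^{k-j}(f · L^j ·)` with Gamma-function coefficients commutes with
multiplication by `q` on elements of weight `w - 2`. -/
theorem construction_lemma {R : Type*} [CommRing R] [Algebra ℝ R]
    (L T : R →ₗ[ℝ] R) (q : R) (n : ℝ)
    (hT : ∀ a b : R, T (a * b) = T a * b + a * T b)
    (hi : ∀ ℓ : ℕ, 1 ≤ ℓ → ∀ m : R,
      (L ^ ℓ) (q * m) - q * (L ^ ℓ) m =
        (2 * (ℓ : ℝ)) • (L ^ (ℓ - 1)) ((2 : ℝ) • T m + (n + 4 - 2 * (ℓ : ℝ)) • m))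
    (hii : T ∘ₗ L = L ∘ₗ T - (2 : ℝ) • L)
    (k : ℕ) (w w' : ℝ)
    (a : ℕ → ℝ)
    (ha : ∀ j : ℕ, j ≤ k → a j =
      (Nat.choose k j : ℝ) *
        (Real.Gamma ((j : ℝ) + (k : ℝ) - w - w' - n / 2) * Real.Gamma (n / 2 + w - (j : ℝ)))
        / (Real.Gamma ((k : ℝ) - w - w' - n / 2) * Real.Gamma (n / 2 + w - (k : ℝ))))
    (hnz : ∀ j : ℕ, j < k →
      ((k : ℝ) - w - w' - n / 2) + (j : ℝ) ≠ 0 ∧ n / 2 + w - (j : ℝ) - 1 ≠ 0)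
    (f : R) (hf : T f = w' • f) (u : R) (hu : T u = (w - 2) • u) :
    ∑ j ∈ Finset.range (k + 1), a j • (L ^ (k - j)) (f * (L ^ j) (q * u))
      = q * ∑ j ∈ Finset.range (k + 1), a j • (L ^ (k - j)) (f * (L ^ j) u) := by
  -- pointwise version of (ii)
  have hTL : ∀ x : R, T (L x) = L (T x) - (2 : ℝ) • L x := by
    intro x
    have h := LinearMap.ext_iff.mp hii x
    simpa using h
  -- eigenvectors of T propagate through powers of L
  have hTpow : ∀ (c : ℝ) (v : R), T v = c • v → ∀ j : ℕ,
      T ((L ^ j) v) = (c - 2 * (j : ℝ)) • (L ^ j) v := by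
    intro c v hv j
    induction j with
    | zero => simpa using hv
    | succ j ih =>
      rw [pow_succ', Module.End.mul_apply, hTL, ih, map_smul, ← sub_smul]
      congr 1
      push_cast
      ring
  -- key expansion: commuting q past L^ℓ on a T-eigenvector
  have key : ∀ (c : ℝ) (v : R), T v = c • v → ∀ ℓ : ℕ,
      (L ^ ℓ) (q * v) = q * (L ^ ℓ) v
        + (2 * (ℓ : ℝ) * (2 * c + n + 4 - 2 * (ℓ : ℝ))) • (L ^ (ℓ - 1)) v := by
    intro c v hv ℓ
    match ℓ with
    | 0 => simp
    | (ℓ + 1) =>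
      have h := hi (ℓ + 1) (Nat.le_add_left 1 ℓ) v
      rw [hv] at h
      have e : (2 : ℝ) • c • v + (n + 4 - 2 * ((ℓ + 1 : ℕ) : ℝ)) • v
          = (2 * c + n + 4 - 2 * ((ℓ + 1 : ℕ) : ℝ)) • v := by
        rw [smul_smul, ← add_smul]
        congr 1
        ring
      rw [e, map_smul, smul_smul] at h
      have h2 := sub_eq_iff_eq_add'.mp h
      rw [h2]
  -- the weight of f * L^j u
  have hP : ∀ j : ℕ, T (f * (L ^ j) u)
      = (w' + (w - 2 - 2 * (j : ℝ))) • (f * (L ^ j) u) := by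
    intro j
    rw [hT, hf, hTpow (w - 2) u hu j, smul_mul_assoc, mul_smul_comm, ← add_smul]
  -- coefficient functions
  set c : ℕ → ℝ := fun j => 2 * (j : ℝ) * (2 * (w - 2) + n + 4 - 2 * (j : ℝ)) with hc
  set d : ℕ → ℝ := fun j =>
    2 * ((k - j : ℕ) : ℝ) * (2 * (w' + (w - 2 - 2 * (j : ℝ))) + n + 4 - 2 * ((k - j : ℕ) : ℝ))
    with hd
  -- the expansion of each summand
  have expand : ∀ j : ℕ, (L ^ (k - j)) (f * (L ^ j) (q * u))
      = q * (L ^ (k - j)) (f * (L ^ j) u)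
        + d j • (L ^ (k - j - 1)) (f * (L ^ j) u)
        + c j • (L ^ (k - j)) (f * (L ^ (j - 1)) u) := by
    intro j
    rw [key (w - 2) u hu j, mul_add, mul_smul_comm, mul_left_comm f q, map_add, map_smul,
      key (w' + (w - 2 - 2 * (j : ℝ))) (f * (L ^ j) u) (hP j) (k - j)]
  -- the key coefficient identity (using the Gamma recurrence)
  have hdiv : ∀ x y X Y D : ℝ, x * X + y * Y = 0 → (x / D) * X + (y / D) * Y = 0 := by
    intro x y X Y D h
    rw [div_mul_eq_mul_div, div_mul_eq_mul_div, ← add_div, h, zero_div]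
  have hcoef : ∀ j : ℕ, j < k → a j * d j + a (j + 1) * c (j + 1) = 0 := by
    intro j hj
    obtain ⟨hA0, hB0⟩ := hnz j hj
    have hA : (j : ℝ) + (k : ℝ) - w - w' - n / 2 ≠ 0 := fun h => hA0 (by linarith)
    have e1 : ((j + 1 : ℕ) : ℝ) + (k : ℝ) - w - w' - n / 2
        = ((j : ℝ) + (k : ℝ) - w - w' - n / 2) + 1 := by push_cast; ring
    have e2 : n / 2 + w - ((j + 1 : ℕ) : ℝ) = n / 2 + w - (j : ℝ) - 1 := by push_cast; ring
    have e3 : n / 2 + w - (j : ℝ) = (n / 2 + w - (j : ℝ) - 1) + 1 := by ring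
    have hch : ((k.choose (j + 1)) : ℝ) * ((j : ℝ) + 1)
        = ((k.choose j) : ℝ) * ((k : ℝ) - (j : ℝ)) := by
      have h2 := congrArg (Nat.cast (R := ℝ)) (Nat.choose_succ_right_eq k j)
      push_cast [Nat.cast_sub hj.le] at h2
      exact h2
    rw [ha j hj.le, ha (j + 1) hj, e1, e3, e2, Real.Gamma_add_one hA,
      Real.Gamma_add_one hB0, hc, hd]
    simp only [Nat.cast_sub hj.le]
    refine hdiv _ _ _ _ _ ?_
    push_cast
    linear_combination (4 * ((j : ℝ) + (k : ℝ) - w - w' - n / 2) * (n / 2 + w - (j : ℝ) - 1)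
      * Real.Gamma ((j : ℝ) + (k : ℝ) - w - w' - n / 2)
      * Real.Gamma (n / 2 + w - (j : ℝ) - 1)) * hch
  -- the two error sums cancel
  have hzero : (∑ j ∈ Finset.range (k + 1), (a j * d j) • (L ^ (k - j - 1)) (f * (L ^ j) u))
      + (∑ j ∈ Finset.range (k + 1), (a j * c j) • (L ^ (k - j)) (f * (L ^ (j - 1)) u))
      = 0 := by
    have h1 : (∑ j ∈ Finset.range (k + 1), (a j * d j) • (L ^ (k - j - 1)) (f * (L ^ j) u))
        = ∑ j ∈ Finset.range k, (a j * d j) • (L ^ (k - j - 1)) (f * (L ^ j) u) := by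
      rw [Finset.sum_range_succ]
      have hdk : d k = 0 := by simp [hd]
      rw [hdk, mul_zero, zero_smul, add_zero]
    have h2 : (∑ j ∈ Finset.range (k + 1), (a j * c j) • (L ^ (k - j)) (f * (L ^ (j - 1)) u))
        = ∑ j ∈ Finset.range k, (a (j + 1) * c (j + 1)) • (L ^ (k - j - 1)) (f * (L ^ j) u) := by
      rw [Finset.sum_range_succ']
      have hc0 : c 0 = 0 := by simp [hc]
      rw [hc0, mul_zero, zero_smul, add_zero]
      refine Finset.sum_congr rfl fun j _ => ?_
      simp only [Nat.sub_sub, Nat.add_sub_cancel]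
    rw [h1, h2, ← Finset.sum_add_distrib]
    refine Finset.sum_eq_zero fun j hj => ?_
    rw [← add_smul, hcoef j (Finset.mem_range.mp hj), zero_smul]
  -- assemble
  calc ∑ j ∈ Finset.range (k + 1), a j • (L ^ (k - j)) (f * (L ^ j) (q * u))
      = ∑ j ∈ Finset.range (k + 1),
          (q * (a j • (L ^ (k - j)) (f * (L ^ j) u))
            + ((a j * d j) • (L ^ (k - j - 1)) (f * (L ^ j) u)
              + (a j * c j) • (L ^ (k - j)) (f * (L ^ (j - 1)) u))) := by
        refine Finset.sum_congr rfl fun j _ => ?_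
        rw [expand j, smul_add, smul_add, smul_smul, smul_smul, ← mul_smul_comm, add_assoc]
    _ = (∑ j ∈ Finset.range (k + 1), q * (a j • (L ^ (k - j)) (f * (L ^ j) u)))
          + ((∑ j ∈ Finset.range (k + 1), (a j * d j) • (L ^ (k - j - 1)) (f * (L ^ j) u))
            + (∑ j ∈ Finset.range (k + 1),
                (a j * c j) • (L ^ (k - j)) (f * (L ^ (j - 1)) u))) := by
        rw [Finset.sum_add_distrib, Finset.sum_add_distrib]
    _ = q * ∑ j ∈ Finset.range (k + 1), a j • (L ^ (k - j)) (f * (L ^ j) u) := by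
        rw [hzero, add_zero, ← Finset.mul_sum]
end

section
/- Let R be a commutative ℝ-algebra, let L : R → R be an ℝ-linear map, let T : R → R be an ℝ-linear derivation (T(ab) = T(a)b + aT(b)), let q ∈ R, and let n be a fixed real number. Assume: (i) for every integer ℓ ≥ 1 and every m ∈ R, L^ℓ(q·m) − q·L^ℓ(m) = 2ℓ·L^{ℓ−1}(2T(m) + (n+4−2ℓ)m); (ii) T∘L = L∘T − 2L. Let k ∈ ℕ, set w := −(n−2k)/3, A := (n+4k)/6, B := (n−2k)/6, and assume B is not a nonpositive integer (i.e. B ≠ −m for every m ∈ ℕ). Define a_{r,s,t} := (k!/(r!·s!·t!))·Γ(A−r)·Γ(A−s)·Γ(A−t)/(Γ(B)·Γ(A)²) for r+s+t = k, where Γ is the real Gamma function. Then for every u ∈ R with T(u) = w·u and every m ∈ R with T(m) = (w−2)·m, one has Σ_{r+s+t=k} a_{r,s,t}·L^{r}((L^{s}u)·(L^{t}(q·m))) = q·Σ_{r+s+t=k} a_{r,s,t}·L^{r}((L^{s}u)·(L^{t}m)). -/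
/-- The algebraic content of Corollary 2.4: the ambient curved Ovsienko–Redou
operator commutes with multiplication by `q` on elements of weight `w - 2`. -/
theorem ovsienko_redou_tangential {R : Type*} [CommRing R] [Algebra ℝ R]
    (L T : R →ₗ[ℝ] R) (q : R) (n : ℝ)
    (hT : ∀ a b : R, T (a * b) = T a * b + a * T b)
    (hi : ∀ ℓ : ℕ, 1 ≤ ℓ → ∀ m : R,
      (L ^ ℓ) (q * m) - q * (L ^ ℓ) m =
        (2 * (ℓ : ℝ)) • (L ^ (ℓ - 1)) ((2 : ℝ) • T m + (n + 4 - 2 * (ℓ : ℝ)) • m))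
    (hii : T ∘ₗ L = L ∘ₗ T - (2 : ℝ) • L)
    (k : ℕ) (w A B : ℝ)
    (hw : w = -(n - 2 * (k : ℝ)) / 3)
    (hA : A = (n + 4 * (k : ℝ)) / 6) (hB : B = (n - 2 * (k : ℝ)) / 6)
    (hBint : ∀ m : ℕ, B ≠ -(m : ℝ))
    (a : ℕ → ℕ → ℕ → ℝ)
    (ha : ∀ r s t : ℕ, r + s + t = k → a r s t =
      ((k.factorial : ℝ) / ((r.factorial : ℝ) * (s.factorial : ℝ) * (t.factorial : ℝ)))
        * (Real.Gamma (A - (r : ℝ)) * Real.Gamma (A - (s : ℝ)) * Real.Gamma (A - (t : ℝ)))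
        / (Real.Gamma B * Real.Gamma A ^ 2))
    (u : R) (hu : T u = w • u) (m : R) (hm : T m = (w - 2) • m) :
    ∑ r ∈ Finset.range (k + 1), ∑ s ∈ Finset.range (k + 1 - r),
        a r s (k - r - s) • (L ^ r) ((L ^ s) u * (L ^ (k - r - s)) (q * m))
      = q * ∑ r ∈ Finset.range (k + 1), ∑ s ∈ Finset.range (k + 1 - r),
          a r s (k - r - s) • (L ^ r) ((L ^ s) u * (L ^ (k - r - s)) m) := by
  -- basic Gamma facts
  have hAB : A = B + (k : ℝ) := by rw [hA, hB]; ring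
  have hBne : Real.Gamma B ≠ 0 := Real.Gamma_ne_zero hBint
  have hAint : ∀ j : ℕ, A ≠ -(j : ℝ) := by
    intro j h
    apply hBint (j + k)
    rw [hAB] at h
    push_cast
    linarith
  have hAGne : Real.Gamma A ≠ 0 := Real.Gamma_ne_zero hAint
  have hAsub : ∀ j : ℕ, j < k → A - (j : ℝ) - 1 ≠ 0 := by
    intro j hj h
    apply hBint (k - (j + 1))
    have e : ((k - (j + 1) : ℕ) : ℝ) = (k : ℝ) - (j : ℝ) - 1 := by
      rw [Nat.cast_sub hj]
      push_cast; ring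
    rw [e, hAB] at *
    linarith
  -- T on powers of L
  have hTLx : ∀ x : R, T (L x) = L (T x) - (2 : ℝ) • L x := by
    intro x
    have := LinearMap.congr_fun hii x
    simpa using this
  have hTLpow : ∀ (j : ℕ) (x : R),
      T ((L ^ j) x) = (L ^ j) (T x) - (2 * (j : ℝ)) • (L ^ j) x := by
    intro j
    induction j with
    | zero => intro x; simp
    | succ j ih =>
      intro x
      have h1 : (L ^ (j + 1)) x = (L ^ j) (L x) := by
        rw [pow_succ, Module.End.mul_apply]
      have h2 : (L ^ (j + 1)) (T x) = (L ^ j) (L (T x)) := by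
        rw [pow_succ, Module.End.mul_apply]
      rw [h1, ih (L x), hTLx x, map_sub, map_smul, ← h1]
      rw [h2] at *
      push_cast
      module
  have hTu : ∀ s : ℕ, T ((L ^ s) u) = (w - 2 * (s : ℝ)) • (L ^ s) u := by
    intro s
    rw [hTLpow s u, hu, map_smul, ← sub_smul]
  have hTm : ∀ t : ℕ, T ((L ^ t) m) = (w - 2 - 2 * (t : ℝ)) • (L ^ t) m := by
    intro t
    rw [hTLpow t m, hm, map_smul, ← sub_smul]
  -- step: L^t (q*m)
  have hqm : ∀ t : ℕ, (L ^ t) (q * m)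
      = q * (L ^ t) m + (4 * (t : ℝ) * (A - (t : ℝ))) • (L ^ (t - 1)) m := by
    intro t
    match t with
    | 0 => simp
    | t + 1 =>
      have h := hi (t + 1) (by omega) m
      rw [hm] at h
      have harg : (2 : ℝ) • ((w - 2) • m) + (n + 4 - 2 * ((t + 1 : ℕ) : ℝ)) • m
          = (2 * (A - ((t + 1 : ℕ) : ℝ))) • m := by
        rw [smul_smul, ← add_smul]
        congr 1
        rw [hw, hA]
        push_cast; ring
      rw [harg, map_smul, smul_smul] at h
      simp only [Nat.add_sub_cancel] at h
      have hc : (2 * ((t + 1 : ℕ) : ℝ)) * (2 * (A - ((t + 1 : ℕ) : ℝ)))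
          = 4 * ((t + 1 : ℕ) : ℝ) * (A - ((t + 1 : ℕ) : ℝ)) := by ring
      rw [hc] at h
      simpa only [Nat.add_sub_cancel] using sub_eq_iff_eq_add'.mp h
  -- step: L^r (q * Y) for Y = L^s u * L^t m with r+s+t = k
  have hqY : ∀ r s t : ℕ, r + s + t = k →
      (L ^ r) (q * ((L ^ s) u * (L ^ t) m))
        = q * (L ^ r) ((L ^ s) u * (L ^ t) m)
          + (-(4 * (r : ℝ)) * (A - (r : ℝ))) • (L ^ (r - 1)) ((L ^ s) u * (L ^ t) m) := by
    intro r s t hk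
    match r with
    | 0 => simp
    | r + 1 =>
      have h := hi (r + 1) (by omega) ((L ^ s) u * (L ^ t) m)
      have hTY : T ((L ^ s) u * (L ^ t) m)
          = ((w - 2 * (s : ℝ)) + (w - 2 - 2 * (t : ℝ))) • ((L ^ s) u * (L ^ t) m) := by
        rw [hT, hTu, hTm, smul_mul_assoc, mul_smul_comm, ← add_smul]
      rw [hTY] at h
      have harg : (2 : ℝ) • (((w - 2 * (s : ℝ)) + (w - 2 - 2 * (t : ℝ))) • ((L ^ s) u * (L ^ t) m))
            + (n + 4 - 2 * ((r + 1 : ℕ) : ℝ)) • ((L ^ s) u * (L ^ t) m)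
          = (2 * ((w - 2 * (s : ℝ)) + (w - 2 - 2 * (t : ℝ))) + (n + 4 - 2 * ((r + 1 : ℕ) : ℝ)))
              • ((L ^ s) u * (L ^ t) m) := by
        rw [smul_smul, ← add_smul]
      rw [harg, map_smul, smul_smul] at h
      simp only [Nat.add_sub_cancel] at h
      have hkc : (k : ℝ) = ((r : ℝ) + 1) + (s : ℝ) + (t : ℝ) := by exact_mod_cast congrArg (Nat.cast : ℕ → ℝ) hk.symm
      have hc : (2 * ((r + 1 : ℕ) : ℝ))
            * (2 * ((w - 2 * (s : ℝ)) + (w - 2 - 2 * (t : ℝ))) + (n + 4 - 2 * ((r + 1 : ℕ) : ℝ)))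
          = -(4 * ((r + 1 : ℕ) : ℝ)) * (A - ((r + 1 : ℕ) : ℝ)) := by
        rw [hw, hA, hkc]
        push_cast; ring
      rw [hc] at h
      simpa only [Nat.add_sub_cancel] using sub_eq_iff_eq_add'.mp h
  -- Gamma cancellation identity
  have hGamma : ∀ r s t : ℕ, (r + 1) + s + t = k →
      a (r + 1) s t * (((r : ℝ) + 1) * (A - ((r : ℝ) + 1)))
        = a r s (t + 1) * (((t : ℝ) + 1) * (A - ((t : ℝ) + 1))) := by
    intro r s t hk
    have hrk : r < k := by omega
    have htk : t < k := by omega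
    have er : Real.Gamma (A - (r : ℝ)) = (A - (r : ℝ) - 1) * Real.Gamma (A - (r : ℝ) - 1) := by
      have h := Real.Gamma_add_one (hAsub r hrk)
      rw [show A - (r : ℝ) - 1 + 1 = A - (r : ℝ) by ring] at h
      exact h
    have et : Real.Gamma (A - (t : ℝ)) = (A - (t : ℝ) - 1) * Real.Gamma (A - (t : ℝ) - 1) := by
      have h := Real.Gamma_add_one (hAsub t htk)
      rw [show A - (t : ℝ) - 1 + 1 = A - (t : ℝ) by ring] at h
      exact h
    rw [ha (r + 1) s t hk, ha r s (t + 1) (by omega)]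
    push_cast [Nat.factorial_succ]
    rw [show A - ((r : ℝ) + 1) = A - (r : ℝ) - 1 by ring,
      show A - ((t : ℝ) + 1) = A - (t : ℝ) - 1 by ring, er, et]
    have h1 : ((r : ℝ) + 1) ≠ 0 := by positivity
    have h2 : ((t : ℝ) + 1) ≠ 0 := by positivity
    have h3 : (r.factorial : ℝ) ≠ 0 := Nat.cast_ne_zero.mpr r.factorial_ne_zero
    have h4 : (s.factorial : ℝ) ≠ 0 := Nat.cast_ne_zero.mpr s.factorial_ne_zero
    have h5 : (t.factorial : ℝ) ≠ 0 := Nat.cast_ne_zero.mpr t.factorial_ne_zero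
    field_simp
  -- pointwise expansion of each term
  have key : ∀ r s : ℕ, r + s ≤ k →
      a r s (k - r - s) • (L ^ r) ((L ^ s) u * (L ^ (k - r - s)) (q * m))
        = q * (a r s (k - r - s) • (L ^ r) ((L ^ s) u * (L ^ (k - r - s)) m))
          + (a r s (k - r - s) * (-(4 * (r : ℝ)) * (A - (r : ℝ))))
              • (L ^ (r - 1)) ((L ^ s) u * (L ^ (k - r - s)) m)
          + (a r s (k - r - s) * (4 * ((k - r - s : ℕ) : ℝ) * (A - ((k - r - s : ℕ) : ℝ))))
              • (L ^ r) ((L ^ s) u * (L ^ (k - r - s - 1)) m) := by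
    intro r s hrs
    have hk : r + s + (k - r - s) = k := by omega
    rw [hqm (k - r - s), mul_add, mul_smul_comm, map_add, map_smul,
      mul_left_comm ((L ^ s) u) q, hqY r s (k - r - s) hk,
      smul_add, smul_add, smul_smul, smul_smul, ← mul_smul_comm]
  have expand :
      ∑ r ∈ Finset.range (k + 1), ∑ s ∈ Finset.range (k + 1 - r),
          a r s (k - r - s) • (L ^ r) ((L ^ s) u * (L ^ (k - r - s)) (q * m))
        = (q * ∑ r ∈ Finset.range (k + 1), ∑ s ∈ Finset.range (k + 1 - r),
              a r s (k - r - s) • (L ^ r) ((L ^ s) u * (L ^ (k - r - s)) m))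
          + (∑ r ∈ Finset.range (k + 1), ∑ s ∈ Finset.range (k + 1 - r),
              (a r s (k - r - s) * (-(4 * (r : ℝ)) * (A - (r : ℝ))))
                • (L ^ (r - 1)) ((L ^ s) u * (L ^ (k - r - s)) m))
          + (∑ r ∈ Finset.range (k + 1), ∑ s ∈ Finset.range (k + 1 - r),
              (a r s (k - r - s) * (4 * ((k - r - s : ℕ) : ℝ) * (A - ((k - r - s : ℕ) : ℝ))))
                • (L ^ r) ((L ^ s) u * (L ^ (k - r - s - 1)) m)) := by
    rw [Finset.mul_sum, ← Finset.sum_add_distrib, ← Finset.sum_add_distrib]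
    refine Finset.sum_congr rfl ?_
    intro r hr
    rw [Finset.mul_sum, ← Finset.sum_add_distrib, ← Finset.sum_add_distrib]
    refine Finset.sum_congr rfl ?_
    intro s hs
    refine key r s ?_
    have h1 := Finset.mem_range.mp hr
    have h2 := Finset.mem_range.mp hs
    omega
  have hE1 :
      (∑ r ∈ Finset.range (k + 1), ∑ s ∈ Finset.range (k + 1 - r),
          (a r s (k - r - s) * (-(4 * (r : ℝ)) * (A - (r : ℝ))))
            • (L ^ (r - 1)) ((L ^ s) u * (L ^ (k - r - s)) m))
        = ∑ r ∈ Finset.range k, ∑ s ∈ Finset.range (k - r),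
            (a (r + 1) s (k - (r + 1) - s) * (-(4 * ((r + 1 : ℕ) : ℝ)) * (A - ((r + 1 : ℕ) : ℝ))))
              • (L ^ r) ((L ^ s) u * (L ^ (k - (r + 1) - s)) m) := by
    rw [Finset.sum_range_succ']
    simp only [Nat.cast_zero, mul_zero, zero_mul, neg_zero, zero_smul, smul_zero,
      Finset.sum_const_zero, add_zero, Nat.add_sub_add_right, Nat.add_sub_cancel]
  have hE2 :
      (∑ r ∈ Finset.range (k + 1), ∑ s ∈ Finset.range (k + 1 - r),
          (a r s (k - r - s) * (4 * ((k - r - s : ℕ) : ℝ) * (A - ((k - r - s : ℕ) : ℝ))))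
            • (L ^ r) ((L ^ s) u * (L ^ (k - r - s - 1)) m))
        = ∑ r ∈ Finset.range k, ∑ s ∈ Finset.range (k - r),
            (a r s (k - r - s) * (4 * ((k - r - s : ℕ) : ℝ) * (A - ((k - r - s : ℕ) : ℝ))))
              • (L ^ r) ((L ^ s) u * (L ^ (k - r - s - 1)) m) := by
    rw [Finset.sum_range_succ]
    have hlast : (∑ s ∈ Finset.range (k + 1 - k),
        (a k s (k - k - s) * (4 * ((k - k - s : ℕ) : ℝ) * (A - ((k - k - s : ℕ) : ℝ))))
          • (L ^ k) ((L ^ s) u * (L ^ (k - k - s - 1)) m)) = 0 := by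
      simp
    rw [hlast, add_zero]
    refine Finset.sum_congr rfl ?_
    intro r hr
    have hr' := Finset.mem_range.mp hr
    have hb : k + 1 - r = (k - r) + 1 := by omega
    rw [hb, Finset.sum_range_succ]
    have hz : k - r - (k - r) = 0 := Nat.sub_self _
    simp [hz]
  have hcancel :
      (∑ r ∈ Finset.range k, ∑ s ∈ Finset.range (k - r),
          (a (r + 1) s (k - (r + 1) - s) * (-(4 * ((r + 1 : ℕ) : ℝ)) * (A - ((r + 1 : ℕ) : ℝ))))
            • (L ^ r) ((L ^ s) u * (L ^ (k - (r + 1) - s)) m))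
        + (∑ r ∈ Finset.range k, ∑ s ∈ Finset.range (k - r),
            (a r s (k - r - s) * (4 * ((k - r - s : ℕ) : ℝ) * (A - ((k - r - s : ℕ) : ℝ))))
              • (L ^ r) ((L ^ s) u * (L ^ (k - r - s - 1)) m)) = 0 := by
    rw [← Finset.sum_add_distrib]
    refine Finset.sum_eq_zero ?_
    intro r hr
    rw [← Finset.sum_add_distrib]
    refine Finset.sum_eq_zero ?_
    intro s hs
    have hr' := Finset.mem_range.mp hr
    have hs' := Finset.mem_range.mp hs
    have e1 : k - (r + 1) - s = k - r - s - 1 := by omega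
    have e2 : k - r - s = (k - r - s - 1) + 1 := by omega
    rw [e1]
    rw [show (a r s (k - r - s) * (4 * ((k - r - s : ℕ) : ℝ) * (A - ((k - r - s : ℕ) : ℝ))))
        = (a r s ((k - r - s - 1) + 1) * (4 * (((k - r - s - 1) + 1 : ℕ) : ℝ)
            * (A - (((k - r - s - 1) + 1 : ℕ) : ℝ)))) from by rw [← e2]]
    rw [← add_smul]
    convert zero_smul ℝ ((L ^ r) ((L ^ s) u * (L ^ (k - r - s - 1)) m))
    have hg := hGamma r s (k - r - s - 1) (by omega)
    push_cast at hg ⊢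
    linear_combination (-4 : ℝ) * hg
  rw [expand, hE1, hE2, add_assoc, hcancel, add_zero]
end

section
/- Let R be a commutative ℝ-algebra, let L : R → R be an ℝ-linear map, let T : R → R be an ℝ-linear derivation (T(ab) = T(a)b + aT(b)), let q ∈ R, and let n be a fixed real number. Assume: (i) for every integer ℓ ≥ 1 and every m ∈ R, L^ℓ(q·m) − q·L^ℓ(m) = 2ℓ·L^{ℓ−1}(2T(m) + (n+4−2ℓ)m); (ii) T∘L = L∘T − 2L. Let k, ℓ ∈ ℕ with ℓ ≥ 1 and set w := −(n−2k−2ℓ)/2. Then for every f ∈ R with T(f) = −2ℓ·f and every m ∈ R with T(m) = (w−2)·m, one has Σ_{r+s=k} (k!/(r!·s!))·((ℓ+s−1)!·(ℓ+r−1)!/((ℓ−1)!)²)·L^{r}(f·L^{s}(q·m)) = q·Σ_{r+s=k} (k!/(r!·s!))·((ℓ+s−1)!·(ℓ+r−1)!/((ℓ−1)!)²)·L^{r}(f·L^{s}m). -/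
private noncomputable def cc (k ℓ s : ℕ) : ℝ :=
  ((k.factorial : ℝ) / (((k - s).factorial : ℝ) * (s.factorial : ℝ)))
    * (((ℓ + s - 1).factorial : ℝ) * ((ℓ + (k - s) - 1).factorial : ℝ)
        / ((ℓ - 1).factorial : ℝ) ^ 2)

private lemma cc_id (k ℓ j : ℕ) (hℓ : 1 ≤ ℓ) (hj : j < k) :
    cc k ℓ (j + 1) * (4 * ((j : ℝ) + 1) * ((k : ℝ) + (ℓ : ℝ) - ((j : ℝ) + 1)))
      = 4 * cc k ℓ j * ((k : ℝ) - (j : ℝ)) * ((ℓ : ℝ) + (j : ℝ)) := by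
  obtain ⟨a, rfl⟩ : ∃ a, k = j + 1 + a := ⟨k - (j + 1), by omega⟩
  obtain ⟨b, rfl⟩ : ∃ b, ℓ = b + 1 := ⟨ℓ - 1, by omega⟩
  unfold cc
  have e1 : j + 1 + a - (j + 1) = a := by omega
  have e2 : j + 1 + a - j = a + 1 := by omega
  have e3 : b + 1 + (j + 1) - 1 = b + j + 1 := by omega
  have e4 : b + 1 + j - 1 = b + j := by omega
  have e5 : b + 1 + a - 1 = b + a := by omega
  have e6 : b + 1 + (a + 1) - 1 = b + a + 1 := by omega
  have e7 : b + 1 - 1 = b := by omega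
  rw [e1, e2, e3, e4, e5, e6, e7]
  rw [Nat.factorial_succ (b + j), Nat.factorial_succ (b + a), Nat.factorial_succ j,
    Nat.factorial_succ a]
  have h0 : ((j + 1 + a).factorial : ℝ) ≠ 0 := by exact_mod_cast (Nat.factorial_pos _).ne'
  have h1 : (j.factorial : ℝ) ≠ 0 := by exact_mod_cast (Nat.factorial_pos _).ne'
  have h2 : ((a).factorial : ℝ) ≠ 0 := by exact_mod_cast (Nat.factorial_pos _).ne'
  have h3 : ((b).factorial : ℝ) ≠ 0 := by exact_mod_cast (Nat.factorial_pos _).ne'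
  have h4 : ((b + j).factorial : ℝ) ≠ 0 := by exact_mod_cast (Nat.factorial_pos _).ne'
  have h5 : ((b + a).factorial : ℝ) ≠ 0 := by exact_mod_cast (Nat.factorial_pos _).ne'
  push_cast
  field_simp
  ring

private noncomputable def HH {R : Type*} [CommRing R] [Algebra ℝ R]
    (L : R →ₗ[ℝ] R) (f m : R) (k ℓ : ℕ) : ℕ → R
  | 0 => 0
  | (i + 1) => (4 * cc k ℓ i * ((k : ℝ) - (i : ℝ)) * ((ℓ : ℝ) + (i : ℝ)))
      • (L ^ (k - i - 1)) (f * (L ^ i) m)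

private lemma HH_zero {R : Type*} [CommRing R] [Algebra ℝ R]
    (L : R →ₗ[ℝ] R) (f m : R) (k ℓ : ℕ) : HH L f m k ℓ 0 = 0 := rfl

private lemma HH_succ {R : Type*} [CommRing R] [Algebra ℝ R]
    (L : R →ₗ[ℝ] R) (f m : R) (k ℓ i : ℕ) :
    HH L f m k ℓ (i + 1)
      = (4 * cc k ℓ i * ((k : ℝ) - (i : ℝ)) * ((ℓ : ℝ) + (i : ℝ)))
          • (L ^ (k - i - 1)) (f * (L ^ i) m) := rfl

/-- The algebraic content of Corollary 2.5: the ambient operator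
`Σ_{r+s=k} (k!/(r!s!))((ℓ+s-1)!(ℓ+r-1)!/((ℓ-1)!)²) L^r(f · L^s ·)` commutes
with multiplication by `q` on elements of weight `w - 2`. -/
theorem linear_tangential {R : Type*} [CommRing R] [Algebra ℝ R]
    (L T : R →ₗ[ℝ] R) (q : R) (n : ℝ)
    (hT : ∀ a b : R, T (a * b) = T a * b + a * T b)
    (hi : ∀ ℓ : ℕ, 1 ≤ ℓ → ∀ m : R,
      (L ^ ℓ) (q * m) - q * (L ^ ℓ) m =
        (2 * (ℓ : ℝ)) • (L ^ (ℓ - 1)) ((2 : ℝ) • T m + (n + 4 - 2 * (ℓ : ℝ)) • m))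
    (hii : T ∘ₗ L = L ∘ₗ T - (2 : ℝ) • L)
    (k ℓ : ℕ) (hℓ : 1 ≤ ℓ) (w : ℝ) (hw : w = -(n - 2 * (k : ℝ) - 2 * (ℓ : ℝ)) / 2)
    (f : R) (hf : T f = (-2 * (ℓ : ℝ)) • f) (m : R) (hm : T m = (w - 2) • m) :
    ∑ s ∈ Finset.range (k + 1),
        (((k.factorial : ℝ) / (((k - s).factorial : ℝ) * (s.factorial : ℝ)))
          * (((ℓ + s - 1).factorial : ℝ) * ((ℓ + (k - s) - 1).factorial : ℝ)
              / ((ℓ - 1).factorial : ℝ) ^ 2))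
          • (L ^ (k - s)) (f * (L ^ s) (q * m))
      = q * ∑ s ∈ Finset.range (k + 1),
          (((k.factorial : ℝ) / (((k - s).factorial : ℝ) * (s.factorial : ℝ)))
            * (((ℓ + s - 1).factorial : ℝ) * ((ℓ + (k - s) - 1).factorial : ℝ)
                / ((ℓ - 1).factorial : ℝ) ^ 2))
            • (L ^ (k - s)) (f * (L ^ s) m) := by
  -- T commutes with powers of L up to correction
  have hTL : ∀ y : R, T (L y) = L (T y) - (2 : ℝ) • L y := by
    intro y
    have h := LinearMap.congr_fun hii y
    simpa using h
  have hTpow : ∀ (s : ℕ) (x : R),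
      T ((L ^ s) x) = (L ^ s) (T x) - (2 * (s : ℝ)) • (L ^ s) x := by
    intro s
    induction s with
    | zero => intro x; simp
    | succ s ih =>
      intro x
      rw [pow_succ, Module.End.mul_apply, Module.End.mul_apply, ih (L x), hTL x, map_sub,
        map_smul]
      push_cast
      module
  -- the basic commutator identity in convenient form
  have hgen : ∀ (x : R) (c : ℝ), T x = c • x → ∀ t : ℕ, 1 ≤ t →
      (L ^ t) (q * x) = q * (L ^ t) x
        + (2 * (t : ℝ) * (2 * c + n + 4 - 2 * (t : ℝ))) • (L ^ (t - 1)) x := by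
    intro x c hc t ht
    have h := hi t ht x
    rw [hc, smul_smul, ← add_smul, map_smul, smul_smul] at h
    rw [← sub_eq_iff_eq_add', h]
    congr 1
    ring
  -- weight of f * L^s m
  have hTfm : ∀ s : ℕ,
      T (f * (L ^ s) m) = (w - 2 - 2 * (s : ℝ) - 2 * (ℓ : ℝ)) • (f * (L ^ s) m) := by
    intro s
    rw [hT, hf, hTpow s m, hm, map_smul]
    simp only [smul_mul_assoc, mul_sub, mul_smul_comm]
    module
  -- the key telescoping identity
  have key : ∀ s, s ≤ k →
      cc k ℓ s • ((L ^ (k - s)) (f * (L ^ s) (q * m)) - q * (L ^ (k - s)) (f * (L ^ s) m))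
        = HH L f m k ℓ s - HH L f m k ℓ (s + 1) := by
    intro s hs
    rcases s with _ | j
    · -- s = 0
      simp only [Nat.sub_zero, pow_zero, Module.End.one_apply] at *
      rcases Nat.eq_zero_or_pos k with hk | hk
      · subst hk
        simp [HH, pow_zero, mul_left_comm]
      · have h := hgen (f * m) _ (by simpa using hTfm 0) k hk
        rw [mul_left_comm f q m, h, add_sub_cancel_left, smul_smul]
        rw [HH_zero, HH_succ, zero_sub]
        simp only [pow_zero, Module.End.one_apply, Nat.sub_zero]
        rw [← neg_smul]
        congr 1
        rw [hw]
        push_cast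
        ring
    · -- s = j + 1
      obtain ⟨a, rfl⟩ : ∃ a, k = j + 1 + a := ⟨k - (j + 1), by omega⟩
      have ea : j + 1 + a - (j + 1) = a := by omega
      have eb : j + 1 + a - j - 1 = a := by omega
      have ec : j + 1 + a - (j + 1) - 1 = a - 1 := by omega
      have h1 := hgen m (w - 2) hm (j + 1) (by omega)
      simp only [Nat.add_sub_cancel] at h1
      rw [ea, h1, mul_add, mul_smul_comm, mul_left_comm f q, map_add, map_smul]
      have hA : cc (j + 1 + a) ℓ (j + 1)
            * (2 * ((j + 1 : ℕ) : ℝ) * (2 * (w - 2) + n + 4 - 2 * ((j + 1 : ℕ) : ℝ)))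
          = 4 * cc (j + 1 + a) ℓ j * (((j + 1 + a : ℕ) : ℝ) - (j : ℝ)) * ((ℓ : ℝ) + (j : ℝ)) := by
        rw [show (2 * ((j + 1 : ℕ) : ℝ) * (2 * (w - 2) + n + 4 - 2 * ((j + 1 : ℕ) : ℝ)))
            = 4 * ((j : ℝ) + 1) * (((j + 1 + a : ℕ) : ℝ) + (ℓ : ℝ) - ((j : ℝ) + 1)) from by
          rw [hw]; push_cast; ring]
        exact cc_id (j + 1 + a) ℓ j hℓ (by omega)
      rcases Nat.eq_zero_or_pos a with ha | ha
      · subst ha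
        simp only [pow_zero, Module.End.one_apply] at *
        rw [show q * (f * (L ^ (j + 1)) m) + (2 * ((j + 1 : ℕ) : ℝ)
              * (2 * (w - 2) + n + 4 - 2 * ((j + 1 : ℕ) : ℝ))) • (f * (L ^ j) m)
            - q * (f * (L ^ (j + 1)) m)
            = (2 * ((j + 1 : ℕ) : ℝ) * (2 * (w - 2) + n + 4 - 2 * ((j + 1 : ℕ) : ℝ)))
              • (f * (L ^ j) m) from by ring]
        rw [smul_smul, hA]
        rw [show j + 1 + 1 = (j + 1) + 1 from rfl, HH_succ L f m (j + 1 + 0) ℓ j,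
          HH_succ L f m (j + 1 + 0) ℓ (j + 1), eb]
        simp only [pow_zero, Module.End.one_apply]
        rw [show (((j + 1 + 0 : ℕ) : ℝ) - ((j + 1 : ℕ) : ℝ)) = 0 from by push_cast; ring]
        simp
      · have h2 := hgen (f * (L ^ (j + 1)) m) _ (hTfm (j + 1)) a ha
        rw [h2]
        have hB : cc (j + 1 + a) ℓ (j + 1)
              * (2 * (a : ℝ) * (2 * (w - 2 - 2 * ((j + 1 : ℕ) : ℝ) - 2 * (ℓ : ℝ)) + n + 4
                  - 2 * (a : ℝ)))
            = -(4 * cc (j + 1 + a) ℓ (j + 1) * (((j + 1 + a : ℕ) : ℝ) - ((j + 1 : ℕ) : ℝ))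
                * ((ℓ : ℝ) + ((j + 1 : ℕ) : ℝ))) := by
          rw [hw]; push_cast; ring
        rw [show q * (L ^ a) (f * (L ^ (j + 1)) m)
              + (2 * (a : ℝ) * (2 * (w - 2 - 2 * ((j + 1 : ℕ) : ℝ) - 2 * (ℓ : ℝ)) + n + 4
                  - 2 * (a : ℝ))) • (L ^ (a - 1)) (f * (L ^ (j + 1)) m)
              + (2 * ((j + 1 : ℕ) : ℝ) * (2 * (w - 2) + n + 4 - 2 * ((j + 1 : ℕ) : ℝ)))
                • (L ^ a) (f * (L ^ j) m)
            - q * (L ^ a) (f * (L ^ (j + 1)) m)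
            = (2 * ((j + 1 : ℕ) : ℝ) * (2 * (w - 2) + n + 4 - 2 * ((j + 1 : ℕ) : ℝ)))
                • (L ^ a) (f * (L ^ j) m)
              + (2 * (a : ℝ) * (2 * (w - 2 - 2 * ((j + 1 : ℕ) : ℝ) - 2 * (ℓ : ℝ)) + n + 4
                  - 2 * (a : ℝ))) • (L ^ (a - 1)) (f * (L ^ (j + 1)) m) from by ring]
        rw [smul_add, smul_smul, smul_smul, hA, hB]
        rw [show j + 1 + 1 = (j + 1) + 1 from rfl, HH_succ L f m (j + 1 + a) ℓ j,
          HH_succ L f m (j + 1 + a) ℓ (j + 1), eb, ec]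
        module
  -- assemble
  have hgoalc : ∀ s : ℕ,
      (((k.factorial : ℝ) / (((k - s).factorial : ℝ) * (s.factorial : ℝ)))
        * (((ℓ + s - 1).factorial : ℝ) * ((ℓ + (k - s) - 1).factorial : ℝ)
            / ((ℓ - 1).factorial : ℝ) ^ 2)) = cc k ℓ s := fun _ => rfl
  simp only [hgoalc]
  rw [← sub_eq_zero, Finset.mul_sum]
  simp only [mul_smul_comm]
  rw [← Finset.sum_sub_distrib]
  simp only [← smul_sub]
  have hsum : ∀ s ∈ Finset.range (k + 1),
      cc k ℓ s • ((L ^ (k - s)) (f * (L ^ s) (q * m)) - q * (L ^ (k - s)) (f * (L ^ s) m))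
        = HH L f m k ℓ s - HH L f m k ℓ (s + 1) :=
    fun s hs => key s (Nat.lt_succ_iff.mp (Finset.mem_range.mp hs))
  rw [Finset.sum_congr rfl hsum, Finset.sum_range_sub', HH_zero, HH_succ]
  simp
end

section
/- Fix real numbers n and w, and for each j ∈ ℕ define the polynomial p_{j,w}(X) := ∏_{i=0}^{j−1} (X − (w−2i)(n+w−2i)) in ℝ[X]. Then for every integer j ≥ 1 one has p_{j, w−2} = p_{j,w} + 2j(n+2w−2j)·p_{j−1, w−2} in ℝ[X]. -/
/-- The polynomial `p_{j,w}(X) = ∏_{i=0}^{j-1} (X - (w-2i)(n+w-2i))` encoding the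
operator `P_{2j,w} = ∏_{i=0}^{j-1} (Δ_{g₊} - (w-2i)(n+w-2i))` on the Poincaré space. -/
noncomputable def poincarePoly (n : ℝ) (j : ℕ) (w : ℝ) : Polynomial ℝ :=
  ∏ i ∈ Finset.range j,
    (Polynomial.X - Polynomial.C ((w - 2 * (i : ℝ)) * (n + w - 2 * (i : ℝ))))

lemma poincarePoly_shift (n w : ℝ) (j : ℕ) :
    poincarePoly n j (w - 2)
      = ∏ i ∈ Finset.range j,
          (Polynomial.X - Polynomial.C ((w - 2 * ((i : ℝ) + 1)) * (n + w - 2 * ((i : ℝ) + 1)))) := by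
  unfold poincarePoly
  refine Finset.prod_congr rfl fun i _ => ?_
  congr 1
  ring

/-- The recursion `P_{2j,w-2} = P_{2j,w} + 2j(n+2w-2j) P_{2j-2,w-2}` from the
proof of Lemma 3.1. -/
theorem poincarePoly_recursion (n w : ℝ) :
    ∀ j : ℕ, 1 ≤ j →
      poincarePoly n j (w - 2)
        = poincarePoly n j w
          + (2 * (j : ℝ) * (n + 2 * w - 2 * (j : ℝ))) • poincarePoly n (j - 1) (w - 2) := by
  rintro (_ | k) hj
  · omega
  have h1 : poincarePoly n (k + 1) (w - 2)
      = poincarePoly n k (w - 2)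
        * (Polynomial.X - Polynomial.C ((w - 2 * ((k : ℝ) + 1)) * (n + w - 2 * ((k : ℝ) + 1)))) := by
    rw [poincarePoly_shift, Finset.prod_range_succ, ← poincarePoly_shift]
  have h2 : poincarePoly n (k + 1) w
      = poincarePoly n k (w - 2) * (Polynomial.X - Polynomial.C (w * (n + w))) := by
    unfold poincarePoly
    rw [Finset.prod_range_succ']
    congr 1
    · refine Finset.prod_congr rfl fun i _ => ?_
      congr 1
      push_cast
      ring
    · congr 1
      push_cast
      ring
  simp only [Nat.add_sub_cancel, h1, h2, Polynomial.smul_eq_C_mul]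
  have key : (Polynomial.X - Polynomial.C ((w - 2 * ((k : ℝ) + 1)) * (n + w - 2 * ((k : ℝ) + 1))))
      = (Polynomial.X - Polynomial.C (w * (n + w)))
        + Polynomial.C (2 * ((k : ℝ) + 1) * (n + 2 * w - 2 * ((k : ℝ) + 1))) := by
    rw [sub_add, ← Polynomial.C_sub]
    congr 1
    ring
  push_cast
  rw [key]
  ring
end

section
/- Fix real numbers n and w, and for each j ∈ ℕ define the polynomial p_{j,w}(X) := ∏_{i=0}^{j−1} (X − (w−2i)(n+w−2i)) in ℝ[X]. Then for every j ∈ ℕ one has p_{j, w−2} = Σ_{i=0}^{j} 4^i·(j!/(j−i)!)·(n/2+w−j)_i·p_{j−i, w} in ℝ[X], where (x)_i := x(x+1)⋯(x+i−1) denotes the ascending Pochhammer symbol evaluated at the real number x = n/2+w−j. -/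
noncomputable def pcoeff (n w : ℝ) (j i : ℕ) : ℝ :=
  (4 : ℝ) ^ i * ((j.factorial : ℝ) / ((j - i).factorial : ℝ))
    * (ascPochhammer ℝ i).eval (n / 2 + w - (j : ℝ))

lemma asc_eval_succ (x : ℝ) (i : ℕ) :
    (ascPochhammer ℝ (i+1)).eval x = (ascPochhammer ℝ i).eval x * (x + i) := by
  rw [ascPochhammer_succ_right]; simp

lemma asc_eval_succ_left (x : ℝ) (i : ℕ) :
    (ascPochhammer ℝ (i+1)).eval (x - 1) = (x - 1) * (ascPochhammer ℝ i).eval x := by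
  rw [ascPochhammer_succ_left]
  simp [Polynomial.eval_comp]

lemma pcoeff_zero (n w : ℝ) (j : ℕ) : pcoeff n w j 0 = 1 := by
  simp [pcoeff, div_self, Nat.cast_ne_zero.mpr j.factorial_ne_zero]

lemma pcoeff_rec (n w : ℝ) (i m : ℕ) (b : ℝ)
    (hb : b = (w - 2*((m:ℝ)+1)) * (n + w - 2*((m:ℝ)+1))
        - (w - 2 - 2*((i:ℝ)+(m:ℝ)+1)) * (n + (w-2) - 2*((i:ℝ)+(m:ℝ)+1))) :
    pcoeff n w (i+m+2) (i+1)
      = pcoeff n w (i+m+1) (i+1) + pcoeff n w (i+m+1) i * b := by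
  have e1 : (i+m+2) - (i+1) = m+1 := by omega
  have e2 : (i+m+1) - (i+1) = m := by omega
  have e3 : (i+m+1) - i = m+1 := by omega
  simp only [pcoeff, e1, e2, e3]
  have hx : (n/2 + w - ((i+m+2 : ℕ) : ℝ)) = (n/2 + w - ((i+m+1 : ℕ) : ℝ)) - 1 := by
    push_cast; ring
  rw [hx, asc_eval_succ_left, asc_eval_succ, hb]
  rw [show i+m+2 = (i+m+1)+1 from rfl, Nat.factorial_succ, Nat.factorial_succ m]
  have hF : ((i+m+1).factorial : ℝ) ≠ 0 := Nat.cast_ne_zero.mpr (Nat.factorial_ne_zero _)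
  have hG : ((m).factorial : ℝ) ≠ 0 := Nat.cast_ne_zero.mpr (Nat.factorial_ne_zero _)
  have hm : ((m:ℝ)+1) ≠ 0 := by positivity
  push_cast
  field_simp
  ring

lemma pcoeff_last (n w : ℝ) (j : ℕ) (b : ℝ)
    (hb : b = w * (n + w) - (w - 2 - 2*(j:ℝ)) * (n + (w-2) - 2*(j:ℝ))) :
    pcoeff n w (j+1) (j+1) = pcoeff n w j j * b := by
  simp only [pcoeff, Nat.sub_self, Nat.factorial_zero]
  have hx : (n/2 + w - ((j+1 : ℕ) : ℝ)) = (n/2 + w - (j : ℝ)) - 1 := by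
    push_cast; ring
  rw [hx, asc_eval_succ_left, hb, Nat.factorial_succ]
  push_cast
  ring

lemma poincarePoly_mul (n w : ℝ) (k : ℕ) (a : ℝ) :
    poincarePoly n k w * (Polynomial.X - Polynomial.C a)
      = poincarePoly n (k+1) w
        + Polynomial.C ((w - 2*(k:ℝ))*(n + w - 2*(k:ℝ)) - a) * poincarePoly n k w := by
  have h : poincarePoly n (k+1) w
      = poincarePoly n k w * (Polynomial.X - Polynomial.C ((w - 2*(k:ℝ))*(n + w - 2*(k:ℝ)))) :=
    Finset.prod_range_succ _ k
  rw [h, map_sub]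
  ring

/-- Equation (3.6) of the paper:
`P_{2j,w-2} = Σ_{i=0}^{j} 4^i (j!/(j-i)!) (n/2+w-j)_i P_{2j-2i,w}`, with the
Gamma ratio written as an ascending Pochhammer symbol. -/
theorem poincarePoly_expansion (n w : ℝ) :
    ∀ j : ℕ,
      poincarePoly n j (w - 2)
        = ∑ i ∈ Finset.range (j + 1),
            ((4 : ℝ) ^ i * ((j.factorial : ℝ) / ((j - i).factorial : ℝ))
              * (ascPochhammer ℝ i).eval (n / 2 + w - (j : ℝ)))
              • poincarePoly n (j - i) w := by
  have main : ∀ j : ℕ, poincarePoly n j (w - 2)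
      = ∑ i ∈ Finset.range (j + 1), pcoeff n w j i • poincarePoly n (j - i) w := by
    intro j
    induction j with
    | zero => simp [poincarePoly, pcoeff]
    | succ j ih =>
      set a : ℝ := ((w - 2) - 2*(j:ℝ)) * (n + (w - 2) - 2*(j:ℝ)) with ha
      set b : ℕ → ℝ := fun i => (w - 2*((j-i : ℕ):ℝ)) * (n + w - 2*((j-i : ℕ):ℝ)) - a with hbdef
      have expand : poincarePoly n (j+1) (w-2)
          = poincarePoly n j (w-2) * (Polynomial.X - Polynomial.C a) :=
        Finset.prod_range_succ _ j
      have step1 : poincarePoly n (j+1) (w-2)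
          = ∑ i ∈ Finset.range (j+1),
              (pcoeff n w j i • poincarePoly n (j+1-i) w
                + (pcoeff n w j i * b i) • poincarePoly n (j-i) w) := by
        rw [expand, ih, Finset.sum_mul]
        refine Finset.sum_congr rfl fun i hi => ?_
        have hij : i ≤ j := Nat.lt_succ_iff.mp (Finset.mem_range.mp hi)
        rw [smul_mul_assoc, poincarePoly_mul, show j - i + 1 = j + 1 - i from by omega,
          smul_add, ← Polynomial.smul_eq_C_mul, smul_smul]
      rw [step1, Finset.sum_add_distrib]
      rw [Finset.sum_range_succ' (fun i => pcoeff n w j i • poincarePoly n (j+1-i) w),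
        Finset.sum_range_succ (fun i => (pcoeff n w j i * b i) • poincarePoly n (j-i) w),
        Finset.sum_range_succ' (fun i => pcoeff n w (j+1) i • poincarePoly n (j+1-i) w),
        Finset.sum_range_succ (fun i => pcoeff n w (j+1) (i+1) • poincarePoly n (j+1-(i+1)) w)]
      simp only [Nat.succ_sub_succ, Nat.sub_zero, Nat.sub_self, pcoeff_zero, one_smul]
      have hsum : ∑ i ∈ Finset.range j, pcoeff n w (j+1) (i+1) • poincarePoly n (j-i) w
          = ∑ i ∈ Finset.range j, (pcoeff n w j (i+1) • poincarePoly n (j-i) w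
              + (pcoeff n w j i * b i) • poincarePoly n (j-i) w) := by
        refine Finset.sum_congr rfl fun i hi => ?_
        have hij : i < j := Finset.mem_range.mp hi
        obtain ⟨m, rfl⟩ : ∃ m, j = i + m + 1 := ⟨j - i - 1, by omega⟩
        rw [← add_smul, ← pcoeff_rec n w i m (b i)]
        simp only [hbdef, ha, show i + m + 1 - i = m + 1 from by omega]
        push_cast
        ring
      have hlast : pcoeff n w (j+1) (j+1) • poincarePoly n 0 w
          = (pcoeff n w j j * b j) • poincarePoly n 0 w := by
        rw [pcoeff_last n w j (b j)]
        simp only [hbdef, ha, Nat.sub_self]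
        push_cast
        ring
      rw [hsum, hlast, Finset.sum_add_distrib]
      abel
  exact main
end

section
/- Fix real numbers n and w, and for each j ∈ ℕ define the polynomial p_{j,v}(X) := ∏_{i=0}^{j−1}(X − (v−2i)(n+v−2i)) ∈ ℝ[X]. Let R be a commutative ℝ-algebra and let D : R → R be an ℝ-linear map; write P_{j,v} := p_{j,v}(D) for the evaluation of p_{j,v} at D. Then for every i ∈ ℕ and all φ, ψ ∈ R: φ·(P_{i,w}ψ) − ψ·(P_{i,w}φ) = Σ_{ℓ=1}^{i} [ (P_{i−ℓ, w−2ℓ}φ)·D(P_{ℓ−1, w}ψ) − D(P_{i−ℓ, w−2ℓ}φ)·(P_{ℓ−1, w}ψ) ]. -/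
lemma poincarePoly_succ_back (n : ℝ) (k : ℕ) (v : ℝ) :
    poincarePoly n (k + 1) v
      = (Polynomial.X - Polynomial.C ((v - 2 * k) * (n + v - 2 * k)))
        * poincarePoly n k v := by
  rw [poincarePoly, Finset.prod_range_succ, mul_comm]; rfl

lemma poincarePoly_succ_front (n : ℝ) (k : ℕ) (v : ℝ) :
    poincarePoly n (k + 1) v
      = (Polynomial.X - Polynomial.C (v * (n + v))) * poincarePoly n k (v - 2) := by
  rw [poincarePoly, Finset.prod_range_succ', mul_comm]
  congr 1
  · push_cast; ring_nf
  · refine Finset.prod_congr rfl fun i _ => ?_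
    push_cast; ring_nf

/-- The telescoping identity from the proof of Proposition 4.2:
`φ P_{2i,w}ψ - ψ P_{2i,w}φ = Σ_{ℓ=1}^{i} [(P_{2i-2ℓ,w-2ℓ}φ) D(P_{2ℓ-2,w}ψ)
  - (D P_{2i-2ℓ,w-2ℓ}φ)(P_{2ℓ-2,w}ψ)]`. -/
theorem telescoping_identity {R : Type*} [CommRing R] [Algebra ℝ R]
    (n w : ℝ) (D : Module.End ℝ R)
    (P : ℕ → ℝ → Module.End ℝ R)
    (hP : ∀ j v, P j v = Polynomial.aeval D (poincarePoly n j v)) :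
    ∀ (i : ℕ) (φ ψ : R),
      φ * (P i w) ψ - ψ * (P i w) φ
        = ∑ ℓ ∈ Finset.Icc 1 i,
            ((P (i - ℓ) (w - 2 * (ℓ : ℝ))) φ * D ((P (ℓ - 1) w) ψ)
              - D ((P (i - ℓ) (w - 2 * (ℓ : ℝ))) φ) * (P (ℓ - 1) w) ψ) := by
  intro i φ ψ
  set a : ℕ → R := fun ℓ => (P (i - ℓ) (w - 2 * (ℓ : ℝ))) φ with ha_def
  set b : ℕ → R := fun ℓ => (P ℓ w) ψ with hb_def
  set f : ℕ → R := fun ℓ => a ℓ * b ℓ with hf_def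
  -- recursion for b
  have hb : ∀ k : ℕ, b (k + 1)
      = D (b k) - algebraMap ℝ R ((w - 2 * k) * (n + w - 2 * k)) * b k := by
    intro k
    simp only [hb_def, hP, poincarePoly_succ_back, map_mul, Module.End.mul_apply,
      map_sub, map_add, Polynomial.aeval_X, Polynomial.aeval_C, LinearMap.sub_apply, LinearMap.add_apply,
      Module.algebraMap_end_apply, Algebra.smul_def]
    ring
  -- recursion for a
  have ha : ∀ m : ℕ, m + 1 ≤ i → a m
      = D (a (m + 1)) - algebraMap ℝ R ((w - 2 * m) * (n + w - 2 * m)) * a (m + 1) := by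
    intro m hm
    have hsub : i - m = (i - (m + 1)) + 1 := by omega
    have hv : (w - 2 * (m : ℝ)) - 2 = w - 2 * ((m : ℕ) + 1 : ℕ) := by push_cast; ring
    have := poincarePoly_succ_front n (i - (m + 1)) (w - 2 * (m : ℝ))
    rw [hv] at this
    simp only [ha_def, hsub, hP, this, map_mul, Module.End.mul_apply,
      map_sub, map_add, Polynomial.aeval_X, Polynomial.aeval_C, LinearMap.sub_apply, LinearMap.add_apply,
      Module.algebraMap_end_apply, Algebra.smul_def]
    ring
  -- per-term identity
  have hterm : ∀ ℓ ∈ Finset.Icc 1 i,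
      (P (i - ℓ) (w - 2 * (ℓ : ℝ))) φ * D ((P (ℓ - 1) w) ψ)
        - D ((P (i - ℓ) (w - 2 * (ℓ : ℝ))) φ) * (P (ℓ - 1) w) ψ
      = f ℓ - f (ℓ - 1) := by
    intro ℓ hℓ
    rw [Finset.mem_Icc] at hℓ
    obtain ⟨m, rfl⟩ := Nat.exists_eq_add_of_le hℓ.1
    simp only [Nat.add_sub_cancel_left, hf_def]
    have h1 : 1 + m = m + 1 := by omega
    rw [h1]
    rw [ha m (by omega), hb m]
    show a (m + 1) * D (b m) - D (a (m + 1)) * b m = _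
    ring
  rw [Finset.sum_congr rfl hterm]
  -- telescope
  have htel : ∑ ℓ ∈ Finset.Icc 1 i, (f ℓ - f (ℓ - 1)) = f i - f 0 := by
    rw [← Finset.Ico_add_one_right_eq_Icc, Finset.sum_Ico_eq_sum_range]
    simp only [Nat.add_succ_sub_one, Nat.add_sub_cancel_left, Nat.add_sub_cancel, Nat.succ_sub_one]
    have h2 : ∀ k, f (1 + k) - f k = f (k + 1) - f k := fun k => by rw [Nat.add_comm]
    simp only [h2]
    exact Finset.sum_range_sub f i
  rw [htel]
  -- endpoints
  have hP0 : ∀ v, P 0 v = 1 := by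
    intro v; rw [hP]; simp [poincarePoly]
  have hfi : f i = φ * (P i w) ψ := by
    simp [hf_def, ha_def, hb_def, Nat.sub_self, hP0]
  have hf0 : f 0 = ψ * (P i w) φ := by
    simp only [hf_def, ha_def, hb_def, Nat.sub_zero, Nat.cast_zero, mul_zero, sub_zero, hP0]
    show (P i w) φ * (1 : Module.End ℝ R) ψ = _
    simp [mul_comm]
  rw [hfi, hf0]
end
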